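/- Let X be a finite-dimensional smooth real Banach space and T a bounded linear operator from X to X with operator norm 1 such that [T] = inf{‖Tz‖ : z ∈ S_X} > 0. Then there exists ε ∈ [0,1) such that for every x ∈ M_T and every y ∈ X, x ⊥_B y implies Ty ⊥_B^ε Tx (i.e., T is ε-CLAOR with respect to M_T). -/

import Mathlib

/-- Birkhoff–James orthogonality: `x ⊥_B y` iff `‖x + λ • y‖ ≥ ‖x‖` for every real `λ`. -/
def BJOrth {E : Type*} [NormedAddCommGroup E] [NormedSpace ℝ E] (x y : E) : Prop :=
  ∀ lam : ℝ, ‖x‖ ≤ ‖x + lam • y‖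

/-- `x` is a left-symmetric point: `x ⊥_B y` implies `y ⊥_B x` for all `y`. -/
def LeftSymmetricPt {E : Type*} [NormedAddCommGroup E] [NormedSpace ℝ E] (x : E) : Prop :=
  ∀ y : E, BJOrth x y → BJOrth y x

/-- `x` is a right-symmetric point: `y ⊥_B x` implies `x ⊥_B y` for all `y`. -/
def RightSymmetricPt {E : Type*} [NormedAddCommGroup E] [NormedSpace ℝ E] (x : E) : Prop :=
  ∀ y : E, BJOrth y x → BJOrth x y

/-- A nonzero `x` is a smooth point if there is exactly one norm-one continuous linear
functional `f` with `f x = ‖x‖`. -/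
def SmoothPoint {E : Type*} [NormedAddCommGroup E] [NormedSpace ℝ E] (x : E) : Prop :=
  ∃! f : E →L[ℝ] ℝ, ‖f‖ = 1 ∧ f x = ‖x‖

/-- A normed space is reflexive if the canonical embedding into the double dual is onto. -/
def ReflexiveSpace (E : Type*) [NormedAddCommGroup E] [NormedSpace ℝ E] : Prop :=
  Function.Surjective (NormedSpace.inclusionInDoubleDual ℝ E)

/-- `T` (a compact operator) is a right-symmetric point of the space of compact operators
(with the operator norm): `A ⊥_B T` implies `T ⊥_B A` for every compact operator `A`. -/
def RightSymmetricCompactOp {X Y : Type*} [NormedAddCommGroup X] [NormedSpace ℝ X]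
    [NormedAddCommGroup Y] [NormedSpace ℝ Y] (T : X →L[ℝ] Y) : Prop :=
  ∀ A : X →L[ℝ] Y, IsCompactOperator A → BJOrth A T → BJOrth T A

/-- `T` is left orthogonality preserving at `x`: `x ⊥_B y` implies `T x ⊥_B T y`. -/
def LeftOPAt {X Y : Type*} [NormedAddCommGroup X] [NormedSpace ℝ X]
    [NormedAddCommGroup Y] [NormedSpace ℝ Y] (T : X →L[ℝ] Y) (x : X) : Prop :=
  ∀ y : X, BJOrth x y → BJOrth (T x) (T y)

/-- Approximate Birkhoff–James orthogonality in the sense of Dragomir–Chmieliński: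
`x ⊥_D^ε y` iff `‖x + λ • y‖ ≥ √(1 - ε²) * ‖x‖` for every real `λ`. -/
def ApproxOrthD {E : Type*} [NormedAddCommGroup E] [NormedSpace ℝ E]
    (ε : ℝ) (x y : E) : Prop :=
  ∀ lam : ℝ, Real.sqrt (1 - ε ^ 2) * ‖x‖ ≤ ‖x + lam • y‖

/-- Approximate Birkhoff–James orthogonality in the sense of Chmieliński:
`x ⊥_B^ε y` iff `‖x + λ • y‖² ≥ ‖x‖² - 2ε‖x‖‖λ • y‖` for every real `λ`. -/
def ApproxOrthC {E : Type*} [NormedAddCommGroup E] [NormedSpace ℝ E]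
    (ε : ℝ) (x y : E) : Prop :=
  ∀ lam : ℝ, ‖x‖ ^ 2 - 2 * ε * ‖x‖ * ‖lam • y‖ ≤ ‖x + lam • y‖ ^ 2

section helper
variable {E : Type*} [NormedAddCommGroup E] [NormedSpace ℝ E]

lemma bjorth_smul_right {x y : E} (h : BJOrth x y) (c : ℝ) : BJOrth x (c • y) := by
  intro lam
  simpa [smul_smul] using h (lam * c)

lemma bjorth_smul_left {x y : E} (h : BJOrth x y) (c : ℝ) : BJOrth (c • x) y := by
  rcases eq_or_ne c 0 with rfl | hc
  · intro lam
    simp only [zero_smul, norm_zero]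
    exact norm_nonneg _
  · intro lam
    have key : c • (x + (lam / c) • y) = c • x + lam • y := by
      rw [smul_add, smul_smul]
      congr 1
      field_simp
    calc ‖c • x‖ = |c| * ‖x‖ := by rw [norm_smul, Real.norm_eq_abs]
      _ ≤ |c| * ‖x + (lam / c) • y‖ :=
          mul_le_mul_of_nonneg_left (h (lam / c)) (abs_nonneg c)
      _ = ‖c • x + lam • y‖ := by rw [← key, norm_smul, Real.norm_eq_abs]

lemma support_lemma (v u : E) (hv : v ≠ 0) (d : ℝ)
    (hyp : ∀ t : ℝ, ‖v‖ + t * d ≤ ‖v + t • u‖) :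
    ∃ f : E →L[ℝ] ℝ, ‖f‖ = 1 ∧ f v = ‖v‖ ∧ f u = d := by
  have hd : |d| ≤ ‖u‖ := by
    have h1 := hyp 1
    have h2 := hyp (-1)
    rw [one_smul] at h1
    have t1 : ‖v + u‖ ≤ ‖v‖ + ‖u‖ := norm_add_le v u
    have t2 : ‖v + (-1 : ℝ) • u‖ ≤ ‖v‖ + ‖u‖ := by
      rw [neg_one_smul]
      simpa [sub_eq_add_neg] using norm_sub_le v u
    rw [abs_le]
    constructor <;> nlinarith
  have key0 : ∀ a b : ℝ, 0 ≤ a → |a * ‖v‖ + b * d| ≤ ‖a • v + b • u‖ := by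
    intro a b ha
    rw [abs_le]
    constructor
    · -- lower bound
      have h3 : ‖b • u‖ - ‖a • v‖ ≤ ‖a • v + b • u‖ := by
        have := norm_sub_norm_le (b • u) (-(a • v))
        simpa [sub_neg_eq_add, add_comm] using this
      have h4 : -(b * d) ≤ |b| * ‖u‖ := by
        calc -(b * d) ≤ |b * d| := neg_le_abs _
          _ = |b| * |d| := abs_mul b d
          _ ≤ |b| * ‖u‖ := mul_le_mul_of_nonneg_left hd (abs_nonneg b)
      have h5 : ‖b • u‖ = |b| * ‖u‖ := by rw [norm_smul, Real.norm_eq_abs]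
      have h6 : ‖a • v‖ = a * ‖v‖ := by
        rw [norm_smul, Real.norm_eq_abs, abs_of_nonneg ha]
      linarith
    · rcases eq_or_lt_of_le ha with rfl | ha'
      · have h5 : ‖b • u‖ = |b| * ‖u‖ := by rw [norm_smul, Real.norm_eq_abs]
        have : b * d ≤ |b| * ‖u‖ := by
          calc b * d ≤ |b * d| := le_abs_self _
            _ = |b| * |d| := abs_mul b d
            _ ≤ |b| * ‖u‖ := mul_le_mul_of_nonneg_left hd (abs_nonneg b)
        simpa using this.trans_eq h5.symm
      · have h7 := hyp (b / a)
        have h8 : a • (v + (b / a) • u) = a • v + b • u := by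
          rw [smul_add, smul_smul]
          congr 1
          field_simp
        have h9 : ‖a • (v + (b / a) • u)‖ = a * ‖v + (b / a) • u‖ := by
          rw [norm_smul, Real.norm_eq_abs, abs_of_pos ha']
        have h10 : a * (‖v‖ + (b / a) * d) ≤ a * ‖v + (b / a) • u‖ :=
          mul_le_mul_of_nonneg_left h7 ha'.le
        have h11 : a * (‖v‖ + (b / a) * d) = a * ‖v‖ + b * d := by
          field_simp
        rw [h11, ← h9, h8] at h10
        exact h10
  have key : ∀ a b : ℝ, |a * ‖v‖ + b * d| ≤ ‖a • v + b • u‖ := by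
    intro a b
    rcases le_or_gt 0 a with ha | ha
    · exact key0 a b ha
    · have := key0 (-a) (-b) (by linarith)
      have e1 : (-a) • v + (-b) • u = -(a • v + b • u) := by module
      have e2 : (-a) * ‖v‖ + (-b) * d = -(a * ‖v‖ + b * d) := by ring
      rw [e1, norm_neg, e2, abs_neg] at this
      exact this
  by_cases hcase : ∃ c : ℝ, u = c • v
  · obtain ⟨c, rfl⟩ := hcase
    obtain ⟨f, hf1, hf2⟩ := exists_dual_vector ℝ v (norm_ne_zero_iff.mpr hv)
    have hd2 : d = c * ‖v‖ := by
      have hk := key c (-1)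
      have he : c • v + (-1 : ℝ) • (c • v) = 0 := by module
      rw [he, norm_zero] at hk
      have := abs_nonneg (c * ‖v‖ + (-1) * d)
      have h0 : c * ‖v‖ + (-1) * d = 0 := le_antisymm (le_trans (le_abs_self _) hk)
        (by nlinarith [neg_le_abs (c * ‖v‖ + (-1) * d)])
      linarith
    refine ⟨f, hf1, by exact_mod_cast hf2, ?_⟩
    rw [map_smul]
    have : f v = ‖v‖ := by exact_mod_cast hf2
    rw [smul_eq_mul, this, hd2]
  · have hu0 : u ≠ 0 := fun h0 => hcase ⟨0, by simp [h0]⟩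
    have hli : LinearIndependent ℝ ![v, u] := by
      rw [linearIndependent_fin2]
      refine ⟨hu0, fun a ha => hcase ⟨a⁻¹, ?_⟩⟩
      simp only [Matrix.cons_val_one, Matrix.head_cons, Matrix.cons_val_zero] at ha
      have ha0 : a ≠ 0 := by
        rintro rfl
        rw [zero_smul] at ha
        exact hv ha.symm
      rw [← ha, smul_smul, inv_mul_cancel₀ ha0, one_smul]
    set p : Submodule ℝ E := Submodule.span ℝ (Set.range ![v, u]) with hp
    let B := Module.Basis.span hli
    let φ₀ : p →ₗ[ℝ] ℝ := B.constr ℝ ![‖v‖, d]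
    have hB0 : ((B 0 : p) : E) = v := by simp [B, Module.Basis.span_apply]
    have hB1 : ((B 1 : p) : E) = u := by simp [B, Module.Basis.span_apply]
    have hφ0 : φ₀ (B 0) = ‖v‖ := by simp [φ₀, Module.Basis.constr_basis]
    have hφ1 : φ₀ (B 1) = d := by simp [φ₀, Module.Basis.constr_basis]
    have hbound : ∀ z : p, ‖φ₀ z‖ ≤ 1 * ‖z‖ := by
      intro z
      have hz := B.sum_repr z
      rw [Fin.sum_univ_two] at hz
      set a := B.repr z 0 with hadef
      set b := B.repr z 1 with hbdef
      have hz' : (z : E) = a • v + b • u := by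
        rw [← hz]
        push_cast
        rw [hB0, hB1]
      have hφz : φ₀ z = a * ‖v‖ + b * d := by
        rw [← hz, map_add, map_smul, map_smul, hφ0, hφ1, smul_eq_mul, smul_eq_mul]
      rw [one_mul, Real.norm_eq_abs, hφz]
      calc |a * ‖v‖ + b * d| ≤ ‖a • v + b • u‖ := key a b
        _ = ‖(z : E)‖ := by rw [hz']
        _ = ‖z‖ := rfl
    let φ : p →L[ℝ] ℝ := LinearMap.mkContinuous φ₀ 1 hbound
    obtain ⟨f, hfe, hfn⟩ := exists_extension_norm_eq p φ
    have hvmem : v ∈ p := Submodule.subset_span ⟨0, rfl⟩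
    have humem : u ∈ p := Submodule.subset_span ⟨1, rfl⟩
    have hfv : f v = ‖v‖ := by
      conv_lhs => rw [← hB0]
      rw [hfe (B 0)]
      exact hφ0
    have hfu : f u = d := by
      conv_lhs => rw [← hB1]
      rw [hfe (B 1)]
      exact hφ1
    have hfnorm : ‖f‖ = 1 := by
      have hle : ‖f‖ ≤ 1 := by
        rw [hfn]
        exact LinearMap.mkContinuous_norm_le φ₀ zero_le_one hbound
      have hge : 1 ≤ ‖f‖ := by
        have h1 := f.le_opNorm v
        rw [hfv] at h1
        have hvn : 0 < ‖v‖ := norm_pos_iff.mpr hv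
        rw [Real.norm_eq_abs, abs_of_nonneg (norm_nonneg v)] at h1
        nlinarith
      linarith
    exact ⟨f, hfnorm, hfv, hfu⟩


lemma orth_preserve {X : Type*} [NormedAddCommGroup X] [NormedSpace ℝ X]
    (T : X →L[ℝ] X) (hT : ‖T‖ = 1) (x : X) (hx : ‖x‖ = 1) (hTx : ‖T x‖ = 1)
    (hs : ∃! f : X →L[ℝ] ℝ, ‖f‖ = 1 ∧ f x = ‖x‖)
    (y : X) (hxy : BJOrth x y) : BJOrth (T x) (T y) := by
  have hTx0 : T x ≠ 0 := by
    intro h0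
    rw [h0, norm_zero] at hTx
    norm_num at hTx
  obtain ⟨f, hf1, hf2⟩ := exists_dual_vector ℝ (T x) (norm_ne_zero_iff.mpr hTx0)
  have hf2' : f (T x) = 1 := by rw [← hTx]; exact_mod_cast hf2
  set g : X →L[ℝ] ℝ := f.comp T with hg
  have hgx : g x = 1 := hf2'
  have hgle : ‖g‖ ≤ 1 := by
    calc ‖g‖ ≤ ‖f‖ * ‖T‖ := f.opNorm_comp_le T
      _ = 1 := by rw [hf1, hT, one_mul]
  have hgnorm : ‖g‖ = 1 := by
    have h1 := g.le_opNorm x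
    rw [hgx, hx, mul_one, Real.norm_eq_abs, abs_one] at h1
    linarith
  have hx0 : x ≠ 0 := by
    intro h0
    rw [h0, norm_zero] at hx
    norm_num at hx
  obtain ⟨h, hh1, hh2, hh3⟩ := support_lemma x y hx0 0
    (fun t => by simpa using hxy t)
  obtain ⟨f₀, _, huniq⟩ := hs
  have hgf : g = h := by
    rw [huniq g ⟨hgnorm, by rw [hgx, hx]⟩, huniq h ⟨hh1, hh2⟩]
  have hfTy : f (T y) = 0 := by
    have : g y = h y := by rw [hgf]
    rw [hh3] at this
    exact this
  intro lam
  have h1 : f (T x + lam • T y) = 1 := by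
    rw [map_add, map_smul, hf2', hfTy, smul_eq_mul, mul_zero, add_zero]
  have h2 := f.le_opNorm (T x + lam • T y)
  rw [h1, hf1, one_mul, Real.norm_eq_abs, abs_one] at h2
  rw [hTx]
  exact h2

lemma exists_support_slope {X : Type*} [NormedAddCommGroup X] [NormedSpace ℝ X]
    (v w : X) (hv1 : ‖v‖ = 1) (hw1 : ‖w‖ = 1) (ε : ℝ) (t : ℝ) (ht0 : 0 < t)
    (hslope : ‖v + t • w‖ - 1 < -ε * t) :
    ∃ (f : X →L[ℝ] ℝ) (dd : ℝ),
      ‖f‖ = 1 ∧ f v = 1 ∧ f w = dd ∧ -1 ≤ dd ∧ dd ≤ -ε := by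
  set S : Set ℝ := {z | ∃ t' : ℝ, 0 < t' ∧ z = (‖v + t' • w‖ - 1) / t'} with hS
  have hSne : S.Nonempty := ⟨(‖v + (1:ℝ) • w‖ - 1) / 1, 1, one_pos, rfl⟩
  have hSbd : ∀ z ∈ S, -1 ≤ z := by
    rintro z ⟨t', ht', rfl⟩
    have tri : ‖v‖ - ‖t' • w‖ ≤ ‖v + t' • w‖ := by
      have := norm_sub_norm_le v (-(t' • w))
      simpa [sub_neg_eq_add] using this
    have hn : ‖t' • w‖ = t' := by
      rw [norm_smul, Real.norm_eq_abs, abs_of_pos ht', hw1, mul_one]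
    rw [le_div_iff₀ ht']
    rw [hn, hv1] at tri
    linarith
  have hbdd : BddBelow S := ⟨-1, fun z hz => hSbd z hz⟩
  set dd : ℝ := sInf S with hdd
  have hdd1 : -1 ≤ dd := le_csInf hSne hSbd
  have hdd2 : dd ≤ -ε := by
    have h1 : dd ≤ (‖v + t • w‖ - 1) / t := csInf_le hbdd ⟨t, ht0, rfl⟩
    have h2 : (‖v + t • w‖ - 1) / t ≤ -ε := by
      rw [div_le_iff₀ ht0]
      nlinarith
    linarith
  have hhyp : ∀ t' : ℝ, ‖v‖ + t' * dd ≤ ‖v + t' • w‖ := by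
    intro t'
    rcases lt_trichotomy t' 0 with hneg | rfl | hpos
    · have hge : (‖v + t' • w‖ - 1) / t' ≤ dd := by
        apply le_csInf hSne
        rintro z ⟨s', hs', rfl⟩
        have h0 : (s' - t') • v = s' • (v + t' • w) - t' • (v + s' • w) := by module
        have tri : (s' - t') * ‖v‖ ≤ s' * ‖v + t' • w‖ + (-t') * ‖v + s' • w‖ := by
          have e1 : ‖(s' - t') • v‖ = (s' - t') * ‖v‖ := by
            rw [norm_smul, Real.norm_eq_abs, abs_of_pos (by linarith : (0:ℝ) < s' - t')]
          have e2 : ‖s' • (v + t' • w)‖ = s' * ‖v + t' • w‖ := by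
            rw [norm_smul, Real.norm_eq_abs, abs_of_pos hs']
          have e3 : ‖t' • (v + s' • w)‖ = (-t') * ‖v + s' • w‖ := by
            rw [norm_smul, Real.norm_eq_abs, abs_of_neg hneg]
          calc (s' - t') * ‖v‖ = ‖(s' - t') • v‖ := e1.symm
            _ ≤ ‖s' • (v + t' • w)‖ + ‖t' • (v + s' • w)‖ := by
                rw [h0]; exact norm_sub_le _ _
            _ = s' * ‖v + t' • w‖ + (-t') * ‖v + s' • w‖ := by rw [e2, e3]
        rw [show (‖v + t' • w‖ - 1) / t' = (-(‖v + t' • w‖ - 1)) / (-t') by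
          rw [neg_div_neg_eq]]
        rw [div_le_div_iff₀ (by linarith) hs']
        rw [hv1] at tri
        nlinarith
      have h6 := mul_le_mul_of_nonpos_left hge (le_of_lt hneg)
      rw [mul_div_cancel₀ _ (ne_of_lt hneg)] at h6
      rw [hv1]
      nlinarith
    · simp
    · have hle : dd ≤ (‖v + t' • w‖ - 1) / t' := csInf_le hbdd ⟨t', hpos, rfl⟩
      rw [le_div_iff₀ hpos] at hle
      rw [hv1]
      nlinarith
  have hvne : v ≠ 0 := by
    intro h0
    rw [h0, norm_zero] at hv1
    norm_num at hv1
  obtain ⟨f, hf1, hf2, hf3⟩ := support_lemma v w hvne dd hhyp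
  exact ⟨f, dd, hf1, by rw [hf2, hv1], hf3, hdd1, hdd2⟩

lemma per_n {X : Type*} [NormedAddCommGroup X] [NormedSpace ℝ X]
    (T : X →L[ℝ] X) (ε : ℝ) (hε0 : 0 ≤ ε)
    (x : X) (hx2 : ‖T x‖ = 1) (y0 : X)
    (horto : BJOrth (T x) (T y0)) (lam : ℝ)
    (hbad : ‖T y0 + lam • T x‖ ^ 2 < ‖T y0‖ ^ 2 - 2 * ε * ‖T y0‖ * ‖lam • T x‖) :
    ∃ (w v : X) (f : X →L[ℝ] ℝ) (dd : ℝ),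
      ‖w‖ = 1 ∧ ‖v‖ = 1 ∧ BJOrth (-w) v ∧ ‖f‖ = 1 ∧ f v = 1 ∧ f w = dd ∧
      -1 ≤ dd ∧ dd ≤ -ε := by
  have hTy0 : T y0 ≠ 0 := by
    intro h0
    rw [h0] at hbad
    simp only [norm_zero, zero_add] at hbad
    nlinarith [sq_nonneg ‖lam • T x‖, norm_nonneg (lam • T x)]
  obtain ⟨r, hr⟩ : ∃ r : ℝ, r = ‖T y0‖ := ⟨_, rfl⟩
  have hr0 : 0 < r := hr ▸ norm_pos_iff.mpr hTy0
  have hlam0 : lam ≠ 0 := by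
    rintro rfl
    simp at hbad
  obtain ⟨μ, hμ⟩ : ∃ m : ℝ, m = lam / r := ⟨_, rfl⟩
  have hμ0 : μ ≠ 0 := hμ ▸ div_ne_zero hlam0 hr0.ne'
  obtain ⟨t, ht⟩ : ∃ t : ℝ, t = |μ| := ⟨_, rfl⟩
  have ht0 : 0 < t := ht ▸ abs_pos.mpr hμ0
  obtain ⟨s, hs⟩ : ∃ s : ℝ, s = μ / t := ⟨_, rfl⟩
  have hst : s * t = μ := by rw [hs]; exact div_mul_cancel₀ μ ht0.ne'
  have hsabs : |s| = 1 := by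
    rw [hs, ht, abs_div, abs_abs, div_self (abs_ne_zero.mpr hμ0)]
  obtain ⟨w, hw⟩ : ∃ w : X, w = s • T x := ⟨_, rfl⟩
  have hw1 : ‖w‖ = 1 := by
    rw [hw, norm_smul, Real.norm_eq_abs, hsabs, one_mul, hx2]
  obtain ⟨v, hv⟩ : ∃ v : X, v = r⁻¹ • T y0 := ⟨_, rfl⟩
  have hv1 : ‖v‖ = 1 := by
    rw [hv, norm_smul, Real.norm_eq_abs, abs_of_pos (inv_pos.mpr hr0), ← hr,
      inv_mul_cancel₀ hr0.ne']
  have hvw : BJOrth (-w) v := by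
    have h1 : BJOrth (T x) v := hv ▸ bjorth_smul_right horto r⁻¹
    have h2 := bjorth_smul_left h1 (-s)
    rw [hw, ← neg_smul]
    exact h2
  have hrec : v + t • w = r⁻¹ • (T y0 + lam • T x) := by
    rw [hv, hw, smul_smul, mul_comm t s, hst, smul_add, smul_smul, hμ, div_eq_inv_mul]
  have hlamn : ‖lam • T x‖ = r * t := by
    rw [norm_smul, Real.norm_eq_abs, hx2, mul_one, ht, hμ, abs_div, abs_of_pos hr0]
    field_simp
  have hG : ‖v + t • w‖ = r⁻¹ * ‖T y0 + lam • T x‖ := by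
    rw [hrec, norm_smul, Real.norm_eq_abs, abs_of_pos (inv_pos.mpr hr0)]
  have hslope : ‖v + t • w‖ - 1 < -ε * t := by
    have hg2 : ‖v + t • w‖ ^ 2 < 1 - 2 * ε * t := by
      rw [hG]
      rw [hlamn, ← hr] at hbad
      have hr2 : (0:ℝ) < r ^ 2 := by positivity
      rw [mul_pow, inv_pow, ← div_eq_inv_mul, div_lt_iff₀ hr2]
      nlinarith [hbad]
    nlinarith [norm_nonneg (v + t • w), mul_nonneg hε0 ht0.le]
  obtain ⟨f, dd, hf1, hf2, hf3, hdd1, hdd2⟩ :=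
    exists_support_slope v w hv1 hw1 ε t ht0 hslope
  exact ⟨w, v, f, dd, hw1, hv1, hvw, hf1, hf2, hf3, hdd1, hdd2⟩

end helper

/-- Let `X` be a finite-dimensional smooth Banach space and `T : X → X` a
norm-one bounded operator with `[T] = inf {‖T z‖ : ‖z‖ = 1} > 0`. Then there is `ε ∈ [0,1)`
such that for every `x ∈ M_T` and every `y`, `x ⊥_B y` implies `T y ⊥_B^ε T x` (i.e., `T` is
`ε`-CLAOR with respect to `M_T`). -/
theorem CLAOR_wrt_norm_attainment_set {X : Type*}
    [NormedAddCommGroup X] [NormedSpace ℝ X] [FiniteDimensional ℝ X]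
    (hsmooth : ∀ x : X, x ≠ 0 → SmoothPoint x)
    (T : X →L[ℝ] X) (hT : ‖T‖ = 1)
    (hbelow : 0 < sInf {r : ℝ | ∃ z : X, ‖z‖ = 1 ∧ ‖T z‖ = r}) :
    ∃ ε : ℝ, 0 ≤ ε ∧ ε < 1 ∧
      ∀ x : X, ‖x‖ = 1 → ‖T x‖ = ‖T‖ → ∀ y : X, BJOrth x y → ApproxOrthC ε (T y) (T x) := by
  by_contra hcon
  push_neg at hcon
  have H : ∀ n : ℕ, ∃ (w v : X) (f : X →L[ℝ] ℝ) (dd : ℝ),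
      ‖w‖ = 1 ∧ ‖v‖ = 1 ∧ BJOrth (-w) v ∧ ‖f‖ = 1 ∧ f v = 1 ∧ f w = dd ∧
      -1 ≤ dd ∧ dd ≤ -(1 - 1/(n+1)) := by
    intro n
    have hpos : (0:ℝ) < 1/((n:ℝ)+1) := by positivity
    have hε0 : (0:ℝ) ≤ 1 - 1/((n:ℝ)+1) := by
      have h1 : (1:ℝ)/((n:ℝ)+1) ≤ 1 := by
        rw [div_le_one (by positivity)]
        linarith [Nat.cast_nonneg (α := ℝ) n]
      linarith
    have hε1 : (1:ℝ) - 1/((n:ℝ)+1) < 1 := by linarith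
    obtain ⟨x, hx1, hx2, y, hy, hbad⟩ := hcon _ hε0 hε1
    simp only [ApproxOrthC, not_forall, not_le] at hbad
    obtain ⟨lam, hlam⟩ := hbad
    have hx0 : x ≠ 0 := by
      intro h0
      rw [h0, norm_zero] at hx1
      norm_num at hx1
    have hx2' : ‖T x‖ = 1 := by rw [hx2, hT]
    have horto : BJOrth (T x) (T y) :=
      orth_preserve T hT x hx1 hx2' (hsmooth x hx0) y hy
    exact per_n T _ hε0 x hx2' y horto lam hlam
  choose w v f dd hw1 hv1 hvw hf1 hf2 hf3 hdd1 hdd2 using H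
  let q : ℕ → X × X × (X →L[ℝ] ℝ) := fun n => (w n, v n, f n)
  have hmem : ∀ n, q n ∈ Metric.closedBall (0 : X × X × (X →L[ℝ] ℝ)) 1 := by
    intro n
    rw [Metric.mem_closedBall, dist_zero_right]
    show max ‖w n‖ (max ‖v n‖ ‖f n‖) ≤ 1
    rw [hw1 n, hv1 n, hf1 n]
    norm_num
  have hcompact : IsCompact (Metric.closedBall (0 : X × X × (X →L[ℝ] ℝ)) 1) :=
    isCompact_closedBall _ _
  obtain ⟨p, hpmem, φ, hφmono, hconv⟩ := hcompact.tendsto_subseq hmem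
  obtain ⟨W, V, F⟩ := p
  have hWc : Filter.Tendsto (fun k => w (φ k)) Filter.atTop (nhds W) := by
    have h := Filter.Tendsto.comp
      (continuous_fst.tendsto ((W, V, F) : X × X × (X →L[ℝ] ℝ))) hconv
    exact h
  have hVFc : Filter.Tendsto (fun k => (v (φ k), f (φ k))) Filter.atTop (nhds (V, F)) := by
    have h := Filter.Tendsto.comp
      (continuous_snd.tendsto ((W, V, F) : X × X × (X →L[ℝ] ℝ))) hconv
    exact h
  have hVc : Filter.Tendsto (fun k => v (φ k)) Filter.atTop (nhds V) := by
    have h := Filter.Tendsto.comp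
      (continuous_fst.tendsto ((V, F) : X × (X →L[ℝ] ℝ))) hVFc
    exact h
  have hFc : Filter.Tendsto (fun k => f (φ k)) Filter.atTop (nhds F) := by
    have h := Filter.Tendsto.comp
      (continuous_snd.tendsto ((V, F) : X × (X →L[ℝ] ℝ))) hVFc
    exact h
  have hW1 : ‖W‖ = 1 := by
    have h1 : Filter.Tendsto (fun k => ‖w (φ k)‖) Filter.atTop (nhds ‖W‖) :=
      Filter.Tendsto.comp (continuous_norm.tendsto W) hWc
    have h2 : Filter.Tendsto (fun k : ℕ => (1:ℝ)) Filter.atTop (nhds ‖W‖) := by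
      simpa [hw1] using h1
    exact tendsto_nhds_unique h2 tendsto_const_nhds
  have hFnorm : ‖F‖ = 1 := by
    have h1 : Filter.Tendsto (fun k => ‖f (φ k)‖) Filter.atTop (nhds ‖F‖) :=
      Filter.Tendsto.comp (continuous_norm.tendsto F) hFc
    have h2 : Filter.Tendsto (fun k : ℕ => (1:ℝ)) Filter.atTop (nhds ‖F‖) := by
      simpa [hf1] using h1
    exact tendsto_nhds_unique h2 tendsto_const_nhds
  have hFV : F V = 1 := by
    have hpair : Filter.Tendsto (fun k => (f (φ k), v (φ k))) Filter.atTop (nhds (F, V)) :=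
      hFc.prodMk_nhds hVc
    have heval : Filter.Tendsto (fun k => f (φ k) (v (φ k))) Filter.atTop (nhds (F V)) :=
      Filter.Tendsto.comp (isBoundedBilinearMap_apply.continuous.tendsto (F, V)) hpair
    have h2 : Filter.Tendsto (fun k : ℕ => (1:ℝ)) Filter.atTop (nhds (F V)) := by
      simpa [hf2] using heval
    exact tendsto_nhds_unique h2 tendsto_const_nhds
  have hFW : F W = -1 := by
    have hpair : Filter.Tendsto (fun k => (f (φ k), w (φ k))) Filter.atTop (nhds (F, W)) :=
      hFc.prodMk_nhds hWc
    have heval : Filter.Tendsto (fun k => f (φ k) (w (φ k))) Filter.atTop (nhds (F W)) :=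
      Filter.Tendsto.comp (isBoundedBilinearMap_apply.continuous.tendsto (F, W)) hpair
    have hevald : Filter.Tendsto (fun k => dd (φ k)) Filter.atTop (nhds (F W)) := by
      simpa [hf3] using heval
    have hupperf : Filter.Tendsto (fun k : ℕ => -1 + 1/((k:ℝ)+1)) Filter.atTop (nhds (-1)) := by
      have := tendsto_one_div_add_atTop_nhds_zero_nat (𝕜 := ℝ)
      have h3 := Filter.Tendsto.add (tendsto_const_nhds : Filter.Tendsto (fun _ : ℕ => (-1:ℝ)) Filter.atTop (nhds (-1))) this
      simpa using h3
    have hsq : Filter.Tendsto (fun k => dd (φ k)) Filter.atTop (nhds (-1)) := by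
      apply tendsto_of_tendsto_of_tendsto_of_le_of_le tendsto_const_nhds hupperf
      · exact fun k => hdd1 (φ k)
      · intro k
        have h4 := hdd2 (φ k)
        have h5 : ((k:ℝ)+1) ≤ ((φ k : ℕ):ℝ)+1 := by
          have h5a : k ≤ φ k := hφmono.le_apply
          have h5b : (k:ℝ) ≤ (φ k : ℝ) := by exact_mod_cast h5a
          linarith
        have h6 : 1/(((φ k : ℕ):ℝ)+1) ≤ 1/((k:ℝ)+1) :=
          one_div_le_one_div_of_le (by positivity) h5
        linarith
    exact tendsto_nhds_unique hevald hsq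
  have hBJ : BJOrth (-W) V := by
    intro lam
    have hcont : Continuous fun pr : X × X => ‖-pr.1 + lam • pr.2‖ :=
      (continuous_fst.neg.add (continuous_snd.const_smul lam)).norm
    have htd : Filter.Tendsto (fun k => ‖-(w (φ k)) + lam • v (φ k)‖) Filter.atTop
        (nhds ‖-W + lam • V‖) := by
      have h := Filter.Tendsto.comp (hcont.tendsto ((W, V) : X × X)) (hWc.prodMk_nhds hVc)
      exact h
    have hb : ∀ k, 1 ≤ ‖-(w (φ k)) + lam • v (φ k)‖ := by
      intro k
      have := hvw (φ k) lam
      rwa [norm_neg, hw1 (φ k)] at this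
    have : 1 ≤ ‖-W + lam • V‖ := ge_of_tendsto' htd hb
    rwa [norm_neg, hW1]
  have hWne : (-W) ≠ 0 := by
    intro h0
    rw [← norm_eq_zero] at h0
    rw [norm_neg, hW1] at h0
    norm_num at h0
  obtain ⟨h0, hh0, huniq⟩ := hsmooth (-W) hWne
  obtain ⟨h, hh1, hh2, hh3⟩ := support_lemma (-W) V hWne 0
    (fun t => by simpa using hBJ t)
  have e1 : F = h0 := huniq F ⟨hFnorm, by rw [map_neg, hFW, norm_neg, hW1]; norm_num⟩
  have e2 : h = h0 := huniq h ⟨hh1, hh2⟩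
  have e3 : F V = h V := by rw [e1, ← e2]
  rw [hFV, hh3] at e3
  norm_num at e3
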